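/- Let A ∈ L(H)⁺ and let S be a closed subspace of H such that the pair (A,S) is compatible. Then the set P(A,S) of A-Hermitian projections with range S is the affine manifold P_{A,S} + L(S^⊥, N(A) ∩ S), i.e., every element of P(A,S) differs from the distinguished element P_{A,S} by an operator that vanishes on S and maps S^⊥ into N(A) ∩ S. -/

import Mathlib

open ContinuousLinearMap

section AuxRing

variable {R : Type*} [Ring R] [StarRing R]

private lemma aux_key {a p b : R} (ha : star a = a) (hp : star p = p)
    (hb1 : p * b = b)
    (hx : p * (a * b) = p * a - p * (a * p)) :
    a * (p + b) = (p + star b) * a := by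
  have hx' : star b * (a * p) = a * p - p * (a * p) := by
    have h := congrArg star hx
    simpa [star_mul, ha, hp, mul_assoc] using h
  have hsplit : a * p = p * (a * p) + star b * (a * p) := by
    rw [hx']; abel
  have h1 : a * b = p * (a * b) + star b * (a * b) := by
    conv_lhs => rw [← hb1, ← mul_assoc, hsplit]
    simp only [add_mul, mul_assoc, hb1]
  have h2 : star b * a = star b * (a * p) + star b * (a * b) := by
    have h3 : a * b - p * (a * b) = star b * (a * b) := sub_eq_of_eq_add' h1
    have h4 := congrArg star h3
    simp only [star_sub, star_mul, star_star, ha, hp, mul_assoc] at h4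
    rw [← h4]; abel
  rw [mul_add, add_mul, h1, hx, h2, hx']
  abel

end AuxRing

section AuxPos

variable {H : Type*} [NormedAddCommGroup H] [InnerProductSpace ℂ H] [CompleteSpace H]

private lemma aux_pos {A : H →L[ℂ] H} (hA : A.IsPositive) {x : H}
    (h : inner ℂ (A x) x = (0 : ℂ)) : A x = 0 := by
  set c : ℝ := ‖A x‖ ^ 2 with hc
  set M : ℝ := RCLike.re (inner ℂ (A (A x)) (A x) : ℂ) with hM
  have hMnn : 0 ≤ M := hA.re_inner_nonneg_left (A x)
  have hAA : (inner ℂ (A (A x)) x : ℂ) = inner ℂ (A x) (A x) := by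
    rw [← hA.isSelfAdjoint.adjoint_eq, adjoint_inner_left, hA.isSelfAdjoint.adjoint_eq]
  have hc' : (inner ℂ (A x) (A x) : ℂ) = (c : ℂ) := by
    rw [inner_self_eq_norm_sq_to_K]; norm_cast
  have key : ∀ t : ℝ, 0 ≤ 2 * t * c + t ^ 2 * M := by
    intro t
    have h0 := hA.re_inner_nonneg_left (x + (t : ℂ) • A x)
    have hexp : (inner ℂ (A (x + (t : ℂ) • A x)) (x + (t : ℂ) • A x) : ℂ)
        = 2 * t * c + (t : ℂ) ^ 2 * (inner ℂ (A (A x)) (A x) : ℂ) := by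
      simp only [map_add, map_smul, inner_add_left, inner_add_right,
        inner_smul_left, inner_smul_right, h, hAA, hc']
      ring_nf
      simp [Complex.conj_ofReal]
      ring
    rw [hexp] at h0
    simpa [hM, ← Complex.ofReal_pow] using h0
  have hc0 : c = 0 := by
    rcases le_or_gt c 0 with h1 | h1
    · linarith [sq_nonneg ‖A x‖]
    · exfalso
      have hM1 : (0:ℝ) < M + 1 := by linarith
      set t0 : ℝ := -(c / (M + 1)) with ht0def
      have ht0 : t0 * (M + 1) = -c := by
        rw [ht0def]; field_simp
      have e1 : (2*t0*c + t0^2*M) * ((M+1)^2) = -2*c^2*(M+1) + c^2*M := by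
        linear_combination (2*c*(M+1) + M*(t0*(M+1)) - M*c) * ht0
      have h5 : 0 ≤ (2*t0*c + t0^2*M) * ((M+1)^2) :=
        mul_nonneg (key t0) (by positivity)
      rw [e1] at h5
      nlinarith [h1, hMnn]
  have : ‖A x‖ = 0 := by nlinarith [norm_nonneg (A x)]
  simpa using this

end AuxPos

/-- `P(A,S)`: the set of `A`-Hermitian bounded projections with range `S`. -/
def PAS {H : Type*} [NormedAddCommGroup H] [InnerProductSpace ℂ H] [CompleteSpace H]
    (A : H →L[ℂ] H) (S : Submodule ℂ H) : Set (H →L[ℂ] H) :=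
  {Q | Q ∘L Q = Q ∧ LinearMap.range (Q : H →ₗ[ℂ] H) = S ∧ A ∘L Q = adjoint Q ∘L A}

theorem stmt_8
    {H : Type*} [NormedAddCommGroup H] [InnerProductSpace ℂ H] [CompleteSpace H]
    (A : H →L[ℂ] H) (hA : A.IsPositive)
    (S : Submodule ℂ H) [CompleteSpace S]
    (hcompat : (PAS A S).Nonempty)
    -- `Ps` is the orthogonal projection onto `S`, viewed as an operator on `H`.
    (Ps : H →L[ℂ] H) (hPs : Ps = S.subtypeL ∘L S.orthogonalProjectionOnto)
    -- `D` is the reduced solution of the equation `(P A P) X = P A (I - P)`: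
    -- the unique solution whose range lies in the closure of the range of `(P A P)* = P A P`.
    (D : H →L[ℂ] H) (hD : (Ps ∘L A ∘L Ps) ∘L D = Ps ∘L A ∘L (1 - Ps))
    (hDran : LinearMap.range (D : H →ₗ[ℂ] H) ≤
      (LinearMap.range ((adjoint (Ps ∘L A ∘L Ps) : H →L[ℂ] H) : H →ₗ[ℂ] H)).topologicalClosure) :
    PAS A S = {Q : H →L[ℂ] H | ∃ Z : H →L[ℂ] H,
      (∀ s ∈ S, Z s = 0) ∧ LinearMap.range (Z : H →ₗ[ℂ] H) ≤ LinearMap.ker (A : H →ₗ[ℂ] H) ⊓ S ∧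
      Q = (Ps + D) + Z} := by
  have hpstar : star Ps = Ps := by rw [hPs]; exact isSelfAdjoint_starProjection S
  have hastar : star A = A := hA.isSelfAdjoint
  have hPsMem : ∀ x, Ps x ∈ S := by
    intro x
    simp only [hPs, comp_apply, Submodule.subtypeL_apply]
    exact Submodule.coe_mem _
  have hPsId : ∀ s ∈ S, Ps s = s := by
    intro s hs
    simp only [hPs, comp_apply, Submodule.subtypeL_apply]
    exact Submodule.starProjection_eq_self_iff.mpr hs
  have hp2 : Ps * Ps = Ps := by
    ext x; simp [mul_apply, hPsId _ (hPsMem x)]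
  -- multiplicative form of hD
  have hDmul : (Ps * (A * Ps)) * D = Ps * (A * (1 - Ps)) := by
    simpa only [mul_def] using hD
  have hTstar : star (Ps * (A * Ps)) = Ps * (A * Ps) := by
    simp only [star_mul, hpstar, hastar, mul_assoc]
  have hTadj : adjoint (Ps ∘L A ∘L Ps) = Ps ∘L A ∘L Ps := by
    rw [← star_eq_adjoint]
    simpa only [mul_def] using hTstar
  have hSclosed : IsClosed (S : Set H) :=
    (completeSpace_coe_iff_isComplete.mp inferInstance).isClosed
  have hranT : LinearMap.range ((adjoint (Ps ∘L A ∘L Ps) : H →L[ℂ] H) : H →ₗ[ℂ] H) ≤ S := by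
    rw [hTadj]
    rintro _ ⟨y, rfl⟩
    simp only [ContinuousLinearMap.coe_coe, comp_apply]
    exact hPsMem _
  have hDmem : ∀ x, D x ∈ S := by
    intro x
    exact Submodule.topologicalClosure_minimal _ hranT hSclosed
      (hDran (LinearMap.mem_range_self _ x))
  have hDS : ∀ s ∈ S, D s = 0 := by
    intro s hs
    have h0 : (Ps ∘L A ∘L Ps) (D s) = 0 := by
      have h1 := DFunLike.congr_fun hD s
      simp only [comp_apply] at h1 ⊢
      rw [h1]
      simp [sub_apply, hPsId s hs]
    have hmem : D s ∈ (LinearMap.range ((adjoint (Ps ∘L A ∘L Ps) : H →L[ℂ] H) : H →ₗ[ℂ] H)).topologicalClosure :=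
      hDran (LinearMap.mem_range_self _ s)
    have hperp : D s ∈ (LinearMap.range ((adjoint (Ps ∘L A ∘L Ps) : H →L[ℂ] H) : H →ₗ[ℂ] H))ᗮ := by
      rw [Submodule.mem_orthogonal]
      rintro _ ⟨y, rfl⟩
      rw [ContinuousLinearMap.coe_coe, adjoint_inner_left, h0, inner_zero_right]
    have hbi : D s ∈ (LinearMap.range ((adjoint (Ps ∘L A ∘L Ps) : H →L[ℂ] H) : H →ₗ[ℂ] H))ᗮᗮ := by
      rw [Submodule.orthogonal_orthogonal_eq_closure]; exact hmem
    have := (Submodule.mem_orthogonal _ _).mp hbi (D s) hperp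
    exact inner_self_eq_zero.mp this
  have hDid : Ps * D = D := by
    ext x; simp [mul_apply, hPsId _ (hDmem x)]
  have hAD : Ps * (A * D) = Ps * A - Ps * (A * Ps) := by
    have : Ps * (A * D) = (Ps * (A * Ps)) * D := by
      conv_lhs => rw [← hDid]
      simp only [mul_assoc]
    rw [this, hDmul, mul_sub, mul_one, mul_sub]
  have hkerA : ∀ z : H, z ∈ S → Ps (A z) = 0 → A z = 0 := by
    intro z hz h0
    apply aux_pos hA
    have h2 : (inner ℂ (A z) z : ℂ) = inner ℂ (A z) (Ps z) := by rw [hPsId z hz]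
    have h3 : (inner ℂ (A z) (Ps z) : ℂ) = inner ℂ (Ps (A z)) z := by
      conv_lhs => rw [show Ps = adjoint Ps by rw [← star_eq_adjoint, hpstar]]
      rw [adjoint_inner_right]
    rw [h2, h3, h0, inner_zero_left]
  ext Q
  constructor
  · rintro ⟨hQ2, hQr, hQA⟩
    have hQmem : ∀ x, Q x ∈ S := fun x => hQr ▸ LinearMap.mem_range_self _ x
    have hQfix : ∀ s ∈ S, Q s = s := by
      intro s hs
      rw [← hQr] at hs
      obtain ⟨y, rfl⟩ := hs
      have := DFunLike.congr_fun hQ2 y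
      simpa [comp_apply] using this
    have hQp : Q * Ps = Ps := by
      ext x; simp [mul_apply, hQfix _ (hPsMem x)]
    have hpQ : Ps * Q = Q := by
      ext x; simp [mul_apply, hPsId _ (hQmem x)]
    have hQAm : A * Q = star Q * A := by
      rw [star_eq_adjoint]
      simpa only [mul_def] using hQA
    have hb1 : Ps * (Q - Ps) = Q - Ps := by rw [mul_sub, hpQ, hp2]
    have hx : Ps * (A * (Q - Ps)) = Ps * A - Ps * (A * Ps) := by
      have hps : Ps * star Q = Ps := by rw [← hpstar, ← star_mul, hQp, hpstar]
      have h1 : Ps * (A * Q) = Ps * A := by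
        rw [hQAm, ← mul_assoc, hps]
      rw [mul_sub, mul_sub, h1]
    refine ⟨Q - Ps - D, ?_, ?_, ?_⟩
    · intro s hs
      simp [sub_apply, hQfix s hs, hPsId s hs, hDS s hs]
    · rintro _ ⟨y, rfl⟩
      have hmemS : (Q - Ps - D) y ∈ S := by
        simp only [sub_apply]
        exact Submodule.sub_mem _ (Submodule.sub_mem _ (hQmem y) (hPsMem y)) (hDmem y)
      have hz : Ps * (A * (Q - Ps - D)) = 0 := by
        have : A * (Q - Ps - D) = A * (Q - Ps) - A * D := by rw [← mul_sub, sub_sub]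
        rw [this, mul_sub, hx, hAD, sub_self]
      have hz' : Ps (A ((Q - Ps - D) y)) = 0 := by
        have := DFunLike.congr_fun hz y
        simpa [mul_apply] using this
      exact ⟨LinearMap.mem_ker.mpr (hkerA _ hmemS hz'), hmemS⟩
    · abel
  · rintro ⟨Z, hZS, hZr, rfl⟩
    have hZmem : ∀ x, Z x ∈ S := fun x => (hZr (LinearMap.mem_range_self _ x)).2
    have hZker : ∀ x, A (Z x) = 0 := fun x =>
      LinearMap.mem_ker.mp (hZr (LinearMap.mem_range_self _ x)).1
    obtain ⟨b, hbdef⟩ : ∃ b : H →L[ℂ] H, b = D + Z := ⟨_, rfl⟩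
    have hb1 : Ps * b = b := by
      ext x
      simp [hbdef, mul_apply, hPsId _ (Submodule.add_mem _ (hDmem x) (hZmem x))]
    have hbp : b * Ps = 0 := by
      ext x
      simp [hbdef, mul_apply, hDS _ (hPsMem x), hZS _ (hPsMem x)]
    have hAZ : A * Z = 0 := by
      ext x; simp [mul_apply, hZker x]
    have hx : Ps * (A * b) = Ps * A - Ps * (A * Ps) := by
      rw [hbdef, mul_add, mul_add, hAZ, mul_zero, add_zero, hAD]
    have hQform : (Ps + D) + Z = Ps + b := by rw [hbdef]; abel
    refine ⟨?_, ?_, ?_⟩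
    · rw [hQform]
      have hbb : b * b = 0 := by
        calc b * b = b * (Ps * b) := by rw [hb1]
          _ = (b * Ps) * b := by rw [mul_assoc]
          _ = 0 := by rw [hbp, zero_mul]
      have : (Ps + b) * (Ps + b) = Ps + b := by
        calc (Ps + b) * (Ps + b)
            = (Ps * Ps + Ps * b) + (b * Ps + b * b) := by
              rw [add_mul, mul_add, mul_add]
          _ = Ps + b := by rw [hp2, hb1, hbp, hbb]; abel
      simpa only [mul_def] using this
    · apply le_antisymm
      · rintro _ ⟨y, rfl⟩
        simp only [ContinuousLinearMap.coe_coe, add_apply]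
        exact Submodule.add_mem _ (Submodule.add_mem _ (hPsMem y) (hDmem y)) (hZmem y)
      · intro s hs
        exact ⟨s, by simp [add_apply, hPsId s hs, hDS s hs, hZS s hs]⟩
    · rw [← star_eq_adjoint]
      have h9 := aux_key hastar hpstar hb1 hx
      rw [hQform, star_add, hpstar]
      simpa only [mul_def] using h9
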